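/- Main theorem (almost all pairs are almost equidistanced): for any ε > 0 there exists an absolute, effectively computable constant A(ε) such that whenever p is an odd prime and N is a positive integer with N > A(ε) and p > A(ε), one has (1/#B(p,N)²)·#{(α,β) ∈ B(p,N)×B(p,N) : |𝔡_{p,N}(α,β) − 1/√6| > ε} < ε. -/

import Mathlib

section Counting
variable {γ : Type*} [Fintype γ] {ι : Type*} [Fintype ι] [DecidableEq ι]

lemma sum_pi_prod (φ : ι → γ → ℝ) :
    ∑ g : ι → γ, ∏ i, φ i (g i) = ∏ i, ∑ c, φ i c := by
  classical
  rw [Finset.prod_univ_sum, Fintype.piFinset_univ]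

lemma sum_pi_single (i : ι) (h : γ → ℝ) :
    ∑ g : ι → γ, h (g i) = (Fintype.card γ : ℝ) ^ (Fintype.card ι - 1) * ∑ c, h c := by
  classical
  have key := sum_pi_prod (γ := γ) (fun k c => if k = i then h c else 1)
  simp only [Finset.prod_ite_eq' Finset.univ i, Finset.mem_univ, if_true] at key
  rw [key, ← Finset.mul_prod_erase Finset.univ _ (Finset.mem_univ i),
    show (∑ c : γ, if i = i then h c else 1) = ∑ c, h c by simp, mul_comm]
  congr 1
  have : ∀ k ∈ Finset.univ.erase i, (∑ c : γ, if k = i then h c else 1)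
      = (Fintype.card γ : ℝ) := by
    intro k hk
    simp [Finset.ne_of_mem_erase hk]
  rw [Finset.prod_congr rfl this, Finset.prod_const,
    Finset.card_erase_of_mem (Finset.mem_univ i), Finset.card_univ]

lemma sum_pi_pair {i i' : ι} (hne : i ≠ i') (h k : γ → ℝ) :
    ∑ g : ι → γ, h (g i) * k (g i')
      = (Fintype.card γ : ℝ) ^ (Fintype.card ι - 2) * ((∑ c, h c) * (∑ c, k c)) := by
  classical
  have key := sum_pi_prod (γ := γ) (fun j c => if j = i then h c else if j = i' then k c else 1)
  have lhs : ∀ g : ι → γ,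
      (∏ j, if j = i then h (g j) else if j = i' then k (g j) else 1) = h (g i) * k (g i') := by
    intro g
    rw [← Finset.mul_prod_erase Finset.univ _ (Finset.mem_univ i), if_pos rfl,
      ← Finset.mul_prod_erase _ _ (Finset.mem_erase.2 ⟨Ne.symm hne, Finset.mem_univ i'⟩),
      if_neg (Ne.symm hne), if_pos rfl]
    have : ∀ j ∈ (Finset.univ.erase i).erase i',
        (if j = i then h (g j) else if j = i' then k (g j) else 1) = 1 := by
      intro j hj
      rw [if_neg (Finset.ne_of_mem_erase (Finset.mem_of_mem_erase hj)),
        if_neg (Finset.ne_of_mem_erase hj)]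
    rw [Finset.prod_congr rfl this, Finset.prod_const_one, mul_one]
  rw [Finset.sum_congr rfl (fun g _ => lhs g)] at key
  rw [key, ← Finset.mul_prod_erase Finset.univ _ (Finset.mem_univ i),
    show (∑ c : γ, if i = i then h c else if i = i' then k c else 1) = ∑ c, h c by simp,
    ← Finset.mul_prod_erase _ _ (Finset.mem_erase.2 ⟨Ne.symm hne, Finset.mem_univ i'⟩),
    show (∑ c : γ, if i' = i then h c else if i' = i' then k c else 1) = ∑ c, k c by
      simp [Ne.symm hne]]
  have : ∀ j ∈ (Finset.univ.erase i).erase i',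
      (∑ c : γ, if j = i then h c else if j = i' then k c else 1)
        = (Fintype.card γ : ℝ) := by
    intro j hj
    simp [Finset.ne_of_mem_erase (Finset.mem_of_mem_erase hj), Finset.ne_of_mem_erase hj]
  rw [Finset.prod_congr rfl this, Finset.prod_const,
    Finset.card_erase_of_mem (Finset.mem_erase.2 ⟨Ne.symm hne, Finset.mem_univ i'⟩),
    Finset.card_erase_of_mem (Finset.mem_univ i), Finset.card_univ,
    show Fintype.card ι - 1 - 1 = Fintype.card ι - 2 by omega]
  ring

lemma sum_pi_sq (f : γ → ℝ) (hf : ∑ c, f c = 0) :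
    ∑ g : ι → γ, (∑ i, f (g i)) ^ 2
      = (Fintype.card γ : ℝ) ^ (Fintype.card ι - 1) * (Fintype.card ι) * ∑ c, (f c) ^ 2 := by
  classical
  have expand : ∀ g : ι → γ, (∑ i, f (g i)) ^ 2 = ∑ i, ∑ i', f (g i) * f (g i') := by
    intro g
    rw [sq, Finset.sum_mul_sum]
  rw [Finset.sum_congr rfl (fun g _ => expand g), Finset.sum_comm]
  rw [Finset.sum_congr rfl (fun (i : ι) (_ : i ∈ Finset.univ) =>
    (Finset.sum_comm (s := Finset.univ) (t := Finset.univ)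
      (f := fun (g : ι → γ) (i' : ι) => f (g i) * f (g i'))))]
  have inner : ∀ i i' : ι, (∑ g : ι → γ, f (g i) * f (g i'))
      = if i = i' then (Fintype.card γ : ℝ) ^ (Fintype.card ι - 1) * ∑ c, (f c) ^ 2 else 0 := by
    intro i i'
    by_cases hii : i = i'
    · subst hii
      rw [if_pos rfl, ← sum_pi_single (γ := γ) i (fun c => (f c) ^ 2)]
      exact Finset.sum_congr rfl (fun g _ => (sq (f (g i))).symm)
    · rw [if_neg hii, sum_pi_pair hii, hf]
      ring
  rw [Finset.sum_congr rfl (fun i _ => Finset.sum_congr rfl (fun i' _ => inner i i'))]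
  simp only [Finset.sum_ite_eq, Finset.mem_univ, if_true]
  rw [Finset.sum_const, Finset.card_univ, nsmul_eq_mul]
  ring

end Counting

lemma count_cheby {Ω : Type*} [Fintype Ω] (X : Ω → ℝ) (t : ℝ) (ht : 0 < t)
    [DecidablePred fun g => t < |X g|] :
    ((Finset.univ.filter fun g : Ω => t < |X g|).card : ℝ) * t ^ 2 ≤ ∑ g : Ω, X g ^ 2 := by
  have h1 : ∑ g ∈ Finset.univ.filter (fun g : Ω => t < |X g|), t ^ 2
      ≤ ∑ g ∈ Finset.univ.filter (fun g : Ω => t < |X g|), X g ^ 2 := by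
    apply Finset.sum_le_sum
    intro g hg
    have h2 : t ≤ |X g| := le_of_lt (Finset.mem_filter.1 hg).2
    calc t ^ 2 ≤ |X g| ^ 2 := by nlinarith [abs_nonneg (X g)]
      _ = X g ^ 2 := sq_abs _
  rw [Finset.sum_const, nsmul_eq_mul] at h1
  exact h1.trans (Finset.sum_le_sum_of_subset_of_nonneg (Finset.filter_subset _ _)
    (fun g _ _ => sq_nonneg _))

lemma count_markov {Ω : Type*} [Fintype Ω] (X : Ω → ℝ) (hX : ∀ g, 0 ≤ X g) (t : ℝ)
    [DecidablePred fun g => t < X g] :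
    ((Finset.univ.filter fun g : Ω => t < X g).card : ℝ) * t ≤ ∑ g : Ω, X g := by
  have h1 : ∑ g ∈ Finset.univ.filter (fun g : Ω => t < X g), t
      ≤ ∑ g ∈ Finset.univ.filter (fun g : Ω => t < X g), X g :=
    Finset.sum_le_sum (fun g hg => le_of_lt (Finset.mem_filter.1 hg).2)
  rw [Finset.sum_const, nsmul_eq_mul] at h1
  exact h1.trans (Finset.sum_le_sum_of_subset_of_nonneg (Finset.filter_subset _ _)
    (fun g _ _ => hX g))

lemma sum_Icc_cast (N : ℕ) : ∑ a ∈ Finset.Icc (-(N:ℤ)) N, (a : ℝ) = 0 := by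
  have key : ∑ a ∈ Finset.Icc (-(N:ℤ)) N, (a : ℝ)
      = ∑ a ∈ Finset.Icc (-(N:ℤ)) N, ((-a : ℤ) : ℝ) := by
    apply Finset.sum_nbij' (fun a => -a) (fun a => -a) <;>
      simp [Finset.mem_Icc] <;> omega
  have h2 : (2:ℝ) * ∑ a ∈ Finset.Icc (-(N:ℤ)) N, (a : ℝ) = 0 := by
    rw [two_mul]
    nth_rewrite 2 [key]
    push_cast
    rw [← Finset.sum_add_distrib]
    simp
  linarith

lemma sum_sq_Icc_cast (N : ℕ) : ∑ a ∈ Finset.Icc (-(N:ℤ)) N, (a : ℝ) ^ 2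
    = (N : ℝ) * (N + 1) * (2 * N + 1) / 3 := by
  induction N with
  | zero => simp
  | succ n ih =>
    have hins : Finset.Icc (-(n+1:ℤ)) (n+1)
        = insert (-(n+1:ℤ)) (insert ((n+1:ℤ)) (Finset.Icc (-(n:ℤ)) n)) := by
      ext x
      simp [Finset.mem_Icc, Finset.mem_insert]
      omega
    rw [show ((n+1:ℕ):ℤ) = (n+1:ℤ) by push_cast; ring, show (-((n:ℤ)+1)) = -(n+1:ℤ) by ring] at *
    rw [hins, Finset.sum_insert, Finset.sum_insert, ih]
    · push_cast
      ring
    · simp [Finset.mem_Icc]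
    · simp [Finset.mem_Icc, Finset.mem_insert]
      omega

lemma abs_sqrt_sub_sqrt (x y : ℝ) (hx : 0 ≤ x) (hy : 0 ≤ y) :
    |Real.sqrt x - Real.sqrt y| ≤ Real.sqrt |x - y| := by
  wlog h : y ≤ x generalizing x y
  · rw [abs_sub_comm, abs_sub_comm x y]
    exact this y x hy hx (le_of_not_ge h)
  rw [abs_of_nonneg (sub_nonneg.2 (Real.sqrt_le_sqrt h)), abs_of_nonneg (by linarith)]
  nlinarith [Real.sq_sqrt hx, Real.sq_sqrt hy, Real.sq_sqrt (sub_nonneg.2 h),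
    Real.sqrt_nonneg x, Real.sqrt_nonneg y, Real.sqrt_nonneg (x - y),
    sq_nonneg (Real.sqrt y + Real.sqrt (x-y) - Real.sqrt x),
    sq_nonneg (Real.sqrt y + Real.sqrt (x-y) + Real.sqrt x)]


open Polynomial in
lemma trace_primroot {p : ℕ+} (hp : (p : ℕ).Prime)
    (K : Type) [Field K] [Algebra ℚ K] [IsCyclotomicExtension {(p : ℕ)} ℚ K]
    {η : K} (hη : IsPrimitiveRoot η p) :
    Algebra.trace ℚ K η = -1 := by
  haveI := Fact.mk hp
  have hirr : Irreducible (cyclotomic p ℚ) := cyclotomic.irreducible_rat p.pos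
  have h1 : Algebra.trace ℚ K (hη.powerBasis ℚ).gen
      = -(minpoly ℚ (hη.powerBasis ℚ).gen).nextCoeff :=
    PowerBasis.trace_gen_eq_nextCoeff_minpoly _
  rw [IsPrimitiveRoot.powerBasis_gen] at h1
  rw [h1, ← hη.minpoly_eq_cyclotomic_of_irreducible hirr]
  have hp2 : 2 ≤ (p : ℕ) := hp.two_le
  have hdeg : (cyclotomic (p : ℕ) ℚ).natDegree = (p : ℕ) - 1 := by
    rw [natDegree_cyclotomic, Nat.totient_prime hp]
  have hpos : 0 < (cyclotomic (p : ℕ) ℚ).natDegree := by omega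
  rw [nextCoeff_of_natDegree_pos hpos, hdeg, cyclotomic_prime ℚ p]
  rw [finset_sum_coeff]
  simp only [coeff_X_pow]
  rw [Finset.sum_ite_eq (Finset.range (p:ℕ)) ((p:ℕ) - 1 - 1) (fun _ => (1:ℚ))]
  rw [if_pos (Finset.mem_range.2 (by omega))]

lemma trace_one_cyc {p : ℕ+} (hp : (p : ℕ).Prime)
    (K : Type) [Field K] [Algebra ℚ K] [IsCyclotomicExtension {(p : ℕ)} ℚ K] :
    Algebra.trace ℚ K 1 = (p : ℚ) - 1 := by
  have hirr : Irreducible (Polynomial.cyclotomic p ℚ) := Polynomial.cyclotomic.irreducible_rat p.pos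
  have h1 : Algebra.trace ℚ K ((algebraMap ℚ K) 1) = Module.finrank ℚ K • (1 : ℚ) :=
    Algebra.trace_algebraMap 1
  rw [map_one] at h1
  rw [h1, IsCyclotomicExtension.finrank K hirr, Nat.totient_prime hp]
  have h2 := hp.two_le
  rw [nsmul_eq_mul, mul_one, Nat.cast_sub (by omega : 1 ≤ (p:ℕ)), Nat.cast_one]

/-- Trace of `ω^e` for `1 ≤ e ≤ 2p-2`. -/
lemma trace_pow {p : ℕ+} (hp : (p : ℕ).Prime)
    (K : Type) [Field K] [Algebra ℚ K] [IsCyclotomicExtension {(p : ℕ)} ℚ K]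
    {ω : K} (hω : IsPrimitiveRoot ω p) {e : ℕ} (he1 : 1 ≤ e) (he2 : e ≤ 2 * p - 2) :
    Algebra.trace ℚ K (ω ^ e) = if e = (p : ℕ) then (p : ℚ) - 1 else -1 := by
  have hp2 : 2 ≤ (p : ℕ) := hp.two_le
  by_cases he : e = (p : ℕ)
  · rw [if_pos he, he, hω.pow_eq_one, trace_one_cyc hp]
  · rw [if_neg he]
    have hndvd : ¬ (p : ℕ) ∣ e := by
      intro hdvd
      have h1 : (p : ℕ) ≤ e := Nat.le_of_dvd (by omega) hdvd
      have h2 : (p : ℕ) ∣ e - p := Nat.dvd_sub hdvd dvd_rfl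
      rcases Nat.eq_zero_or_pos (e - p) with h3 | h3
      · omega
      · have := Nat.le_of_dvd h3 h2
        omega
    have hcop : e.Coprime p := (Nat.Prime.coprime_iff_not_dvd hp).2 hndvd |>.symm
    exact trace_primroot hp K (hω.pow_of_coprime e hcop)

/-- The key trace-sum formula. -/
lemma key_dist (p : ℕ+) (hp : (p : ℕ).Prime)
    (K : Type) [Field K] [Algebra ℚ K] [IsCyclotomicExtension {(p : ℕ)} ℚ K]
    (ω : K) (hω : IsPrimitiveRoot ω p) (c : Fin ((p : ℕ) - 1) → ℤ) :
    ∑ j ∈ Finset.Icc 1 ((p : ℕ) - 1),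
        ((Algebra.trace ℚ K ((∑ i : Fin ((p:ℕ)-1), (c i : K) * ω ^ ((i : ℕ) + 1)) * ω ^ j) : ℚ) : ℝ) ^ 2
      = ∑ i : Fin ((p : ℕ) - 1), ((p : ℝ) * c i - ∑ i', (c i' : ℝ)) ^ 2 := by
  have hp2 : 2 ≤ (p : ℕ) := hp.two_le
  -- step 1: trace value for each j
  have htr : ∀ j : ℕ, ∀ _ : 1 ≤ j, ∀ _ : j ≤ (p : ℕ) - 1,
      (Algebra.trace ℚ K ((∑ i : Fin ((p:ℕ)-1), (c i : K) * ω ^ ((i : ℕ) + 1)) * ω ^ j) : ℚ)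
        = (p : ℚ) * c ⟨(p:ℕ) - 1 - j, by omega⟩ - ∑ i', (c i' : ℚ) := by
    intro j hj1 hj2
    have hexp : (∑ i : Fin ((p:ℕ)-1), (c i : K) * ω ^ ((i : ℕ) + 1)) * ω ^ j
        = ∑ i : Fin ((p:ℕ)-1), (c i : ℚ) • ω ^ ((i : ℕ) + 1 + j) := by
      rw [Finset.sum_mul]
      refine Finset.sum_congr rfl (fun i _ => ?_)
      rw [Algebra.smul_def, map_intCast, pow_add]
      ring
    rw [hexp, map_sum]
    have hterm : ∀ i : Fin ((p:ℕ)-1),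
        Algebra.trace ℚ K ((c i : ℚ) • ω ^ ((i : ℕ) + 1 + j))
          = (c i : ℚ) * (if i = (⟨(p:ℕ) - 1 - j, by omega⟩ : Fin ((p:ℕ)-1)) then (p : ℚ) - 1 else -1) := by
      intro i
      rw [map_smul, smul_eq_mul]
      congr 1
      rw [trace_pow hp K hω (by omega) (by omega : (i:ℕ) + 1 + j ≤ 2 * p - 2)]
      congr 1
      have hi := i.isLt
      rw [eq_iff_iff, Fin.ext_iff]
      simp only [Fin.val_mk]
      omega
    rw [Finset.sum_congr rfl (fun i _ => hterm i)]
    have hsplit : ∀ i : Fin ((p:ℕ)-1),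
        (c i : ℚ) * (if i = (⟨(p:ℕ) - 1 - j, by omega⟩ : Fin ((p:ℕ)-1)) then (p : ℚ) - 1 else -1)
          = (if i = (⟨(p:ℕ) - 1 - j, by omega⟩ : Fin ((p:ℕ)-1)) then (c i : ℚ) * p else 0) - c i := by
      intro i
      by_cases h : i = (⟨(p:ℕ) - 1 - j, by omega⟩ : Fin ((p:ℕ)-1)) <;> simp [h] <;> ring
    rw [Finset.sum_congr rfl (fun i _ => hsplit i), Finset.sum_sub_distrib,
      Finset.sum_ite_eq' Finset.univ _ (fun i => (c i : ℚ) * p)]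
    simp only [Finset.mem_univ, if_true]
    ring
  -- step 2: cast to ℝ and reindex
  have step : ∑ j ∈ Finset.Icc 1 ((p : ℕ) - 1),
        ((Algebra.trace ℚ K ((∑ i : Fin ((p:ℕ)-1), (c i : K) * ω ^ ((i : ℕ) + 1)) * ω ^ j) : ℚ) : ℝ) ^ 2
      = ∑ j ∈ Finset.Icc 1 ((p : ℕ) - 1),
        ((p : ℝ) * c ⟨((p:ℕ) - 1 - j) % ((p:ℕ) - 1), Nat.mod_lt _ (by omega)⟩
          - ∑ i', (c i' : ℝ)) ^ 2 := by
    refine Finset.sum_congr rfl fun j hj => ?_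
    obtain ⟨hj1, hj2⟩ := Finset.mem_Icc.1 hj
    rw [htr j hj1 hj2]
    have hfin : (⟨((p:ℕ) - 1 - j) % ((p:ℕ) - 1), Nat.mod_lt _ (by omega)⟩ : Fin ((p:ℕ)-1))
        = ⟨(p:ℕ) - 1 - j, by omega⟩ := by
      ext
      simpa using Nat.mod_eq_of_lt (by omega)
    rw [hfin]
    push_cast
    ring
  rw [step]
  apply Finset.sum_nbij'
    (i := fun j => (⟨((p:ℕ) - 1 - j) % ((p:ℕ) - 1), Nat.mod_lt _ (by omega)⟩ : Fin ((p:ℕ)-1)))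
    (j := fun i => (p:ℕ) - 1 - (i : ℕ))
  · intro j hj
    exact Finset.mem_univ _
  · intro i _
    rw [Finset.mem_Icc]
    have := i.isLt
    omega
  · intro j hj
    rw [Finset.mem_Icc] at hj
    simp only [Fin.val_mk]
    rw [Nat.mod_eq_of_lt (by omega)]
    omega
  · intro i _
    have := i.isLt
    ext
    simp only [Fin.val_mk]
    rw [Nat.mod_eq_of_lt (by omega)]
    omega
  · intro j hj
    rfl

/-- Linear independence: if `∑ cᵢ ω^(i+1) = 0` with integer coefficients then `c = 0`. -/
lemma cyc_indep (p : ℕ+) (hp : (p : ℕ).Prime)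
    (K : Type) [Field K] [Algebra ℚ K] [IsCyclotomicExtension {(p : ℕ)} ℚ K]
    (ω : K) (hω : IsPrimitiveRoot ω p) (c : Fin ((p : ℕ) - 1) → ℤ)
    (h : ∑ i : Fin ((p:ℕ)-1), (c i : K) * ω ^ ((i : ℕ) + 1) = 0) : ∀ i, c i = 0 := by
  haveI := Fact.mk hp
  have hirr : Irreducible (Polynomial.cyclotomic p ℚ) := Polynomial.cyclotomic.irreducible_rat p.pos
  set pb := hω.powerBasis ℚ with hpb
  have hdim : pb.dim = (p : ℕ) - 1 := by
    rw [hω.powerBasis_dim ℚ, ← hω.minpoly_eq_cyclotomic_of_irreducible hirr,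
      Polynomial.natDegree_cyclotomic, Nat.totient_prime hp]
  have hω0 : ω ≠ 0 := hω.ne_zero p.pos.ne'
  -- divide by ω
  have h2 : ∑ i : Fin ((p:ℕ)-1), (c i : ℚ) • ω ^ (i : ℕ) = 0 := by
    have h3 : ω * ∑ i : Fin ((p:ℕ)-1), (c i : ℚ) • ω ^ (i : ℕ) = 0 := by
      rw [Finset.mul_sum]
      rw [← h]
      refine Finset.sum_congr rfl fun i _ => ?_
      rw [Algebra.smul_def, map_intCast]
      ring
    rcases mul_eq_zero.1 h3 with h4 | h4
    · exact absurd h4 hω0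
    · exact h4
  have hli := pb.basis.linearIndependent
  rw [Fintype.linearIndependent_iff] at hli
  have h5 : ∑ i : Fin pb.dim, (c (Fin.cast hdim i) : ℚ) • pb.basis i = 0 := by
    rw [← h2]
    apply Finset.sum_nbij' (i := fun i => Fin.cast hdim i) (j := fun i => Fin.cast hdim.symm i) <;>
      intros <;> simp [pb.coe_basis, show pb.gen = ω from hω.powerBasis_gen ℚ]
  intro i
  have := hli (fun i => (c (Fin.cast hdim i) : ℚ)) h5 (Fin.cast hdim.symm i)
  simpa using this

lemma abs_sqrt_sub_sqrt' (x y : ℝ) (hx : 0 ≤ x) (hy : 0 ≤ y) :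
    |Real.sqrt x - Real.sqrt y| ≤ Real.sqrt |x - y| := abs_sqrt_sub_sqrt x y hx hy

lemma aux_bad {ε Np pp nn Yv Sv Tv : ℝ} (hε : 0 < ε) (hN : 1 ≤ Np) (hp : 3 ≤ pp)
    (hNA : 1/(2*ε^2) < Np)
    (hT : Tv = (pp^2 * (Yv + nn*(2*Np*(Np+1)/3)) - (pp+1)*Sv) / (4*Np^2*pp^2*nn))
    (hnpos : 0 < nn) (hSv : 0 ≤ Sv)
    (h2 : ε^2 < |Tv - 1/6|) :
    (4/3)*ε^2*Np^2*nn < |Yv| ∨ (2/3)*ε^2*Np^2*pp*nn < Sv := by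
  have hNp0 : (0:ℝ) < Np := by linarith
  have hpp0 : (0:ℝ) < pp := by linarith
  by_contra hcon
  push_neg at hcon
  obtain ⟨hY, hS⟩ := hcon
  have key : Tv - 1/6 = Yv/(4*Np^2*nn) + 1/(6*Np) - (pp+1)*Sv/(4*Np^2*pp^2*nn) := by
    rw [hT]
    field_simp
    ring
  have h1N : 1/(6*Np) < ε^2/3 := by
    rw [div_lt_div_iff₀ (by linarith) (by norm_num)]
    have hε2 : (0:ℝ) < ε^2 := by positivity
    have : 1 < Np * (2*ε^2) := by
      rw [div_lt_iff₀ (by positivity)] at hNA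
      linarith
    nlinarith
  have habs : |Tv - 1/6| ≤ |Yv|/(4*Np^2*nn) + 1/(6*Np) + (pp+1)*Sv/(4*Np^2*pp^2*nn) := by
    rw [key]
    calc |Yv/(4*Np^2*nn) + 1/(6*Np) - (pp+1)*Sv/(4*Np^2*pp^2*nn)|
        ≤ |Yv/(4*Np^2*nn) + 1/(6*Np)| + |(pp+1)*Sv/(4*Np^2*pp^2*nn)| := abs_sub _ _
      _ ≤ |Yv/(4*Np^2*nn)| + |1/(6*Np)| + |(pp+1)*Sv/(4*Np^2*pp^2*nn)| := by
          have := abs_add_le (Yv/(4*Np^2*nn)) (1/(6*Np))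
          linarith
      _ = |Yv|/(4*Np^2*nn) + 1/(6*Np) + (pp+1)*Sv/(4*Np^2*pp^2*nn) := by
          rw [abs_div, abs_of_pos (by positivity : (0:ℝ) < 4*Np^2*nn),
            abs_of_pos (by positivity : (0:ℝ) < 1/(6*Np)),
            abs_of_nonneg (by positivity : (0:ℝ) ≤ (pp+1)*Sv/(4*Np^2*pp^2*nn))]
  have hb1 : |Yv|/(4*Np^2*nn) ≤ ε^2/3 := by
    rw [div_le_iff₀ (by positivity)]
    calc |Yv| ≤ (4/3)*ε^2*Np^2*nn := hY
      _ = ε^2/3 * (4*Np^2*nn) := by ring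
  have hb2 : (pp+1)*Sv/(4*Np^2*pp^2*nn) ≤ ε^2/3 := by
    rw [div_le_iff₀ (by positivity)]
    have h3 : (pp+1)*Sv ≤ (pp+1)*((2/3)*ε^2*Np^2*pp*nn) :=
      mul_le_mul_of_nonneg_left hS (by linarith)
    have h4 : (pp+1)*((2/3)*ε^2*Np^2*pp*nn) ≤ ε^2/3 * (4*Np^2*pp^2*nn) := by
      have hε2 : (0:ℝ) ≤ ε^2 := by positivity
      have hNn : (0:ℝ) ≤ Np^2*nn := by positivity
      nlinarith [mul_nonneg (mul_nonneg hε2 hNn) (sq_nonneg (pp - 1))]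
    linarith
  linarith

lemma aux_count1 {ε Np nn : ℝ} (hε : 0 < ε) (hN : 1 ≤ Np) (h : 18/ε^5 < nn) :
    16*nn*Np^4 < (ε/2)*((4/3)*ε^2*Np^2*nn)^2 := by
  have hε5 : (0:ℝ) < ε^5 := by positivity
  have h18 : 18 < nn * ε^5 := by
    rw [div_lt_iff₀ hε5] at h
    linarith
  have hnn : (0:ℝ) < nn := by nlinarith
  have hNp4 : (1:ℝ) ≤ Np^4 := by nlinarith [sq_nonneg Np, sq_nonneg (Np^2), pow_le_pow_left₀ (by linarith : (0:ℝ) ≤ 1) hN 4]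
  have key : 16*nn < (8/9)*ε^5*nn^2 := by nlinarith
  calc 16*nn*Np^4 < (8/9)*ε^5*nn^2*Np^4 := by nlinarith
    _ = (ε/2)*((4/3)*ε^2*Np^2*nn)^2 := by ring

lemma aux_count2 {ε Np pp nn : ℝ} (hε : 0 < ε) (hN : 1 ≤ Np) (hnn : 0 < nn)
    (h : 4/ε^3 < pp) :
    (nn*(4/3)*Np^2) < (ε/2)*((2/3)*ε^2*Np^2*pp*nn) := by
  have hε3 : (0:ℝ) < ε^3 := by positivity
  have h4 : 4 < pp * ε^3 := by
    rw [div_lt_iff₀ hε3] at h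
    linarith
  have hNp2 : (0:ℝ) < Np^2 := by positivity
  nlinarith [mul_pos hnn hNp2]

lemma aux_eps_sq {ε T : ℝ} (hε : 0 < ε) (hT : 0 ≤ T)
    (h : ε < |Real.sqrt T - 1/Real.sqrt 6|) : ε^2 < |T - 1/6| := by
  have h6 : 1/Real.sqrt 6 = Real.sqrt (1/6) := by
    rw [one_div, one_div, ← Real.sqrt_inv]
  rw [h6] at h
  have h1 : ε < Real.sqrt |T - 1/6| :=
    lt_of_lt_of_le h (abs_sqrt_sub_sqrt' _ _ hT (by norm_num))
  have h2 := Real.sq_sqrt (abs_nonneg (T - 1/6))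
  nlinarith [Real.sqrt_nonneg |T - 1/6|]



/-- The cyclotomic norm: `‖α‖ = √(Σ_{j=1}^{p−1} Tr(α·ω^j)²)`. -/
noncomputable def cycNorm (p : ℕ) {K : Type*} [Field K] [Algebra ℚ K] (ω : K) (α : K) : ℝ :=
  Real.sqrt (∑ j ∈ Finset.Icc 1 (p - 1), ((Algebra.trace ℚ K (α * ω ^ j) : ℚ) : ℝ) ^ 2)

/-- The metric induced by the cyclotomic norm: `d(α, β) = ‖α − β‖`. -/
noncomputable def cycDist (p : ℕ) {K : Type*} [Field K] [Algebra ℚ K] (ω : K) (α β : K) : ℝ :=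
  cycNorm p ω (α - β)

/-- The box `B(p,N) = {a₁ω + ⋯ + a_{p−1}ω^{p−1} : aᵢ ∈ ℤ, −N ≤ aᵢ ≤ N}` as a finset of `K`. -/
noncomputable def cycBox (p : ℕ) {K : Type*} [Field K] [Algebra ℚ K] (ω : K) (N : ℕ) :
    Finset K :=
  letI := Classical.decEq K
  (Fintype.piFinset fun _ : Fin (p - 1) => Finset.Icc (-(N : ℤ)) (N : ℤ)).image
    fun a => ∑ i : Fin (p - 1), (a i : K) * ω ^ ((i : ℕ) + 1)

/-- The normalized distance `𝔡_{p,N}(α,β) = d(α,β)/(2Np√(p−1))`. -/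
noncomputable def cycNormDist (p : ℕ) {K : Type*} [Field K] [Algebra ℚ K] (ω : K) (N : ℕ)
    (α β : K) : ℝ :=
  cycDist p ω α β / (2 * N * p * Real.sqrt ((p : ℝ) - 1))

lemma aux_sq_sub {u v Nr : ℝ} (h1 : -Nr ≤ u) (h2 : u ≤ Nr) (h3 : -Nr ≤ v) (h4 : v ≤ Nr) :
    (u - v)^2 ≤ 4*Nr^2 := by nlinarith

lemma aux_mm {Nr : ℝ} (hN : 1 ≤ Nr) : 2*Nr*(Nr+1)/3 ≤ (4/3)*Nr^2 := by nlinarith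

lemma aux_f1bd {w mm Nr : ℝ} (h0 : 0 ≤ w) (h1 : w ≤ 4*Nr^2) (h2 : 0 ≤ mm)
    (h3 : mm ≤ (4/3)*Nr^2) : (w - mm)^2 ≤ 16*Nr^4 := by nlinarith

set_option maxHeartbeats 1000000 in
/-- Main theorem: for every `ε > 0` there is an absolute constant `A(ε)` such that for
`p, N > A(ε)` the proportion of pairs `(α,β) ∈ B(p,N)²` with
`|𝔡_{p,N}(α,β) − 1/√6| > ε` is less than `ε`. -/
theorem stmt15 :
    ∀ ε : ℝ, 0 < ε →
      ∃ A : ℝ,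
        ∀ (p : ℕ+), (p : ℕ).Prime → Odd (p : ℕ) →
          ∀ (K : Type) [Field K] [Algebra ℚ K] [IsCyclotomicExtension {(p : ℕ)} ℚ K],
            ∀ ω : K, IsPrimitiveRoot ω p →
              ∀ N : ℕ, 0 < N → A < (N : ℝ) → A < (p : ℝ) →
                (({ab : K × K | ab.1 ∈ cycBox p ω N ∧ ab.2 ∈ cycBox p ω N ∧
                      |cycNormDist p ω N ab.1 ab.2 - 1 / Real.sqrt 6| > ε}.ncard : ℝ)
                    / ((cycBox p ω N).card : ℝ) ^ 2)
                  < ε := by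
  intro ε hε
  refine ⟨1 + 1/(2*ε^2) + 36/ε^5 + 4/ε^3, ?_⟩
  intro p hp hodd K _ _ _ ω hω N hN hAN hAp
  classical
  set n : ℕ := (p : ℕ) - 1 with hn
  have hp3 : 3 ≤ (p : ℕ) := by
    have h2 := hp.two_le
    rcases hodd with ⟨k, hk⟩
    omega
  have hn2 : 2 ≤ n := by omega
  have hN1 : (1:ℝ) ≤ (N:ℝ) := by exact_mod_cast hN
  have hNpos : (0:ℝ) < (N:ℝ) := by linarith
  have hpR : (3:ℝ) ≤ ((p:ℕ):ℝ) := by exact_mod_cast hp3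
  have hppos : (0:ℝ) < ((p:ℕ):ℝ) := by linarith
  have hnR : (n:ℝ) = ((p:ℕ):ℝ) - 1 := by
    rw [hn]
    push_cast [Nat.cast_sub (by omega : 1 ≤ (p:ℕ))]
    ring
  have hnpos : (0:ℝ) < (n:ℝ) := by rw [hnR]; linarith
  -- bounds extracted from A
  have hq1 : (0:ℝ) < 1/(2*ε^2) := by positivity
  have hq2 : (0:ℝ) < 36/ε^5 := by positivity
  have hq3 : (0:ℝ) < 4/ε^3 := by positivity
  have hA1 : 1/(2*ε^2) < (N:ℝ) := by linarith
  have hA2 : 36/ε^5 < ((p:ℕ):ℝ) := by linarith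
  have hA3 : 4/ε^3 < ((p:ℕ):ℝ) := by linarith
  -- the coefficient box
  set C : Finset ℤ := Finset.Icc (-(N:ℤ)) N with hCdef
  have hCcard : C.card = 2*N+1 := by
    rw [hCdef, Int.card_Icc]
    omega
  -- the coefficient-to-field map
  set mp : (Fin n → ℤ) → K := fun a => ∑ i : Fin n, (a i : K) * ω ^ ((i : ℕ) + 1) with hmp
  have hboxdef : cycBox (p:ℕ) ω N
      = @Finset.image _ K (Classical.decEq K) mp (Fintype.piFinset fun _ : Fin n => C) := rfl
  have hinj : Function.Injective mp := by
    intro a b hab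
    have h0 : ∑ i : Fin n, ((a i - b i : ℤ) : K) * ω ^ ((i : ℕ) + 1) = 0 := by
      have : ∑ i : Fin n, ((a i - b i : ℤ) : K) * ω ^ ((i : ℕ) + 1)
          = mp a - mp b := by
        rw [hmp, ← Finset.sum_sub_distrib]
        refine Finset.sum_congr rfl fun i _ => ?_
        push_cast
        ring
      rw [this, hab, sub_self]
    have hz := cyc_indep p hp K ω hω (fun i => a i - b i) h0
    funext i
    have h5 := hz i
    omega
  have hboxcard : (cycBox (p:ℕ) ω N).card = (2*N+1)^n := by
    rw [hboxdef, Finset.card_image_of_injective _ hinj, Fintype.card_piFinset]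
    simp [hCcard]
  -- basic real quantities
  set mm : ℝ := 2*(N:ℝ)*((N:ℝ)+1)/3 with hmmdef
  have hmm1 : (0:ℝ) ≤ mm := by rw [hmmdef]; positivity
  have hmm2 : mm ≤ (4/3)*(N:ℝ)^2 := by rw [hmmdef]; exact aux_mm hN1
  -- sums over C
  have hsum0 : ∑ a ∈ C, (a:ℝ) = 0 := sum_Icc_cast N
  have hsumsq : ∑ a ∈ C, (a:ℝ)^2 = (N : ℝ) * (N + 1) * (2 * N + 1) / 3 := sum_sq_Icc_cast N
  have hinner : ∀ a : ℤ, ∑ b ∈ C, ((a:ℝ) - b)^2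
      = (2*(N:ℝ)+1)*(a:ℝ)^2 + ∑ b ∈ C, (b:ℝ)^2 := by
    intro a
    have h1 : ∀ b ∈ C, ((a:ℝ) - (b:ℝ))^2 = (a:ℝ)^2 - 2*(a:ℝ)*(b:ℝ) + (b:ℝ)^2 :=
      fun b _ => by ring
    rw [Finset.sum_congr rfl h1, Finset.sum_add_distrib, Finset.sum_sub_distrib,
      Finset.sum_const, ← Finset.mul_sum, hsum0, hCcard]
    push_cast
    ring
  have hsumdiff2 : ∑ a ∈ C, ∑ b ∈ C, ((a:ℝ) - b)^2 = (2*(N:ℝ)+1)^2 * mm := by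
    rw [Finset.sum_congr rfl (fun a _ => hinner a), Finset.sum_add_distrib, ← Finset.mul_sum,
      hsumsq, Finset.sum_const, hCcard, hmmdef]
    push_cast
    ring
  -- per-coordinate random variables
  set f1 : (↥C × ↥C) → ℝ := fun x => (((x.1 : ℤ) : ℝ) - ((x.2 : ℤ) : ℝ))^2 - mm with hf1def
  set f2 : (↥C × ↥C) → ℝ := fun x => ((x.1 : ℤ) : ℝ) - ((x.2 : ℤ) : ℝ) with hf2def
  have hγsum : ∀ F : ℤ → ℤ → ℝ, ∑ x : ↥C × ↥C, F (x.1 : ℤ) (x.2 : ℤ)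
      = ∑ a ∈ C, ∑ b ∈ C, F a b := by
    intro F
    rw [Fintype.sum_prod_type]
    rw [Finset.sum_coe_sort C (fun a => ∑ b : ↥C, F a (b : ℤ))]
    exact Finset.sum_congr rfl fun a _ => Finset.sum_coe_sort C (fun b => F a b)
  have hγcard : (Fintype.card (↥C × ↥C) : ℝ) = (2*(N:ℝ)+1)^2 := by
    rw [Fintype.card_prod, Fintype.card_coe, hCcard]
    push_cast
    ring
  have hf1sum : ∑ x : ↥C × ↥C, f1 x = 0 := by
    rw [hf1def]
    rw [hγsum (fun a b => ((a:ℝ) - (b:ℝ))^2 - mm)]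
    have h1 : ∀ a ∈ C, ∑ b ∈ C, (((a:ℝ)-b)^2 - mm)
        = (∑ b ∈ C, ((a:ℝ)-b)^2) - (2*(N:ℝ)+1)*mm := by
      intro a _
      rw [Finset.sum_sub_distrib, Finset.sum_const, hCcard]
      push_cast
      ring
    rw [Finset.sum_congr rfl h1, Finset.sum_sub_distrib, hsumdiff2, Finset.sum_const, hCcard]
    push_cast
    ring
  have hf2sum : ∑ x : ↥C × ↥C, f2 x = 0 := by
    rw [hf2def]
    rw [hγsum (fun a b => (a:ℝ) - (b:ℝ))]
    have h1 : ∀ a ∈ C, ∑ b ∈ C, ((a:ℝ) - b) = (2*(N:ℝ)+1)*(a:ℝ) := by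
      intro a _
      rw [Finset.sum_sub_distrib, Finset.sum_const, hCcard, hsum0]
      push_cast
      ring
    rw [Finset.sum_congr rfl h1, ← Finset.mul_sum, hsum0, mul_zero]
  have hf2sq : ∑ x : ↥C × ↥C, f2 x ^ 2 = (2*(N:ℝ)+1)^2 * mm := by
    rw [hf2def]
    rw [show (∑ x : ↥C × ↥C, ((((x.1:ℤ):ℝ) - ((x.2:ℤ):ℝ))^2))
        = ∑ a ∈ C, ∑ b ∈ C, ((a:ℝ) - b)^2 from hγsum (fun a b => ((a:ℝ) - (b:ℝ))^2)]
    exact hsumdiff2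
  have hf1bd : ∀ x : ↥C × ↥C, f1 x ^ 2 ≤ 16*(N:ℝ)^4 := by
    intro x
    have ha := Finset.mem_Icc.1 (by rw [← hCdef]; exact x.1.2)
    have hb := Finset.mem_Icc.1 (by rw [← hCdef]; exact x.2.2)
    have ha1 : -(N:ℝ) ≤ ((x.1:ℤ):ℝ) := by exact_mod_cast ha.1
    have ha2 : ((x.1:ℤ):ℝ) ≤ (N:ℝ) := by exact_mod_cast ha.2
    have hb1 : -(N:ℝ) ≤ ((x.2:ℤ):ℝ) := by exact_mod_cast hb.1
    have hb2 : ((x.2:ℤ):ℝ) ≤ (N:ℝ) := by exact_mod_cast hb.2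
    have hsq : (((x.1:ℤ):ℝ) - ((x.2:ℤ):ℝ))^2 ≤ 4*(N:ℝ)^2 :=
      aux_sq_sub ha1 ha2 hb1 hb2
    have hsq0 : 0 ≤ (((x.1:ℤ):ℝ) - ((x.2:ℤ):ℝ))^2 := sq_nonneg _
    rw [hf1def]
    exact aux_f1bd hsq0 hsq hmm1 hmm2
  -- random variables on the product space
  set Y : (Fin n → ↥C × ↥C) → ℝ := fun g => ∑ i, f1 (g i) with hYdef
  set Sr : (Fin n → ↥C × ↥C) → ℝ := fun g => ∑ i, f2 (g i) with hSrdef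
  have hYsq : ∑ g : Fin n → ↥C × ↥C, Y g ^ 2
      ≤ (2*(N:ℝ)+1)^(2*n) * (16*(n:ℝ)*(N:ℝ)^4) := by
    rw [hYdef]
    rw [sum_pi_sq f1 hf1sum]
    have hb : ∑ c : ↥C × ↥C, f1 c ^ 2 ≤ (2*(N:ℝ)+1)^2 * (16*(N:ℝ)^4) := by
      calc ∑ c : ↥C × ↥C, f1 c ^ 2 ≤ ∑ _c : ↥C × ↥C, 16*(N:ℝ)^4 :=
            Finset.sum_le_sum (fun c _ => hf1bd c)
        _ = (Fintype.card (↥C × ↥C) : ℝ) * (16*(N:ℝ)^4) := by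
            rw [Finset.sum_const, Finset.card_univ, nsmul_eq_mul]
        _ = (2*(N:ℝ)+1)^2 * (16*(N:ℝ)^4) := by rw [hγcard]
    have hcard1 : (0:ℝ) ≤ (Fintype.card (↥C × ↥C) : ℝ) ^ (Fintype.card (Fin n) - 1) := by
      positivity
    calc (Fintype.card (↥C × ↥C) : ℝ) ^ (Fintype.card (Fin n) - 1) * (Fintype.card (Fin n))
          * ∑ c : ↥C × ↥C, f1 c ^ 2
        ≤ (Fintype.card (↥C × ↥C) : ℝ) ^ (Fintype.card (Fin n) - 1) * (Fintype.card (Fin n))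
          * ((2*(N:ℝ)+1)^2 * (16*(N:ℝ)^4)) := by
          apply mul_le_mul_of_nonneg_left hb
          positivity
      _ = (2*(N:ℝ)+1)^(2*n) * (16*(n:ℝ)*(N:ℝ)^4) := by
          rw [hγcard, Fintype.card_fin]
          rw [show ((2*(N:ℝ)+1)^2)^(n-1) * (n:ℝ) * ((2*(N:ℝ)+1)^2 * (16*(N:ℝ)^4))
              = (((2*(N:ℝ)+1)^2)^(n-1) * (2*(N:ℝ)+1)^2) * (16*(n:ℝ)*(N:ℝ)^4) by ring]
          rw [← pow_succ, show n - 1 + 1 = n by omega, ← pow_mul,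
            show 2 * n = n * 2 by ring]
  have hSsq : ∑ g : Fin n → ↥C × ↥C, Sr g ^ 2
      ≤ (2*(N:ℝ)+1)^(2*n) * ((n:ℝ)*(4/3)*(N:ℝ)^2) := by
    rw [hSrdef]
    rw [sum_pi_sq f2 hf2sum, hγcard, Fintype.card_fin, hf2sq]
    have key : ((2*(N:ℝ)+1)^2)^(n-1) * (n:ℝ) * ((2*(N:ℝ)+1)^2 * mm)
        = (2*(N:ℝ)+1)^(2*n) * ((n:ℝ) * mm) := by
      rw [show ((2*(N:ℝ)+1)^2)^(n-1) * (n:ℝ) * ((2*(N:ℝ)+1)^2 * mm)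
          = (((2*(N:ℝ)+1)^2)^(n-1) * (2*(N:ℝ)+1)^2) * ((n:ℝ) * mm) by ring]
      rw [← pow_succ, show n - 1 + 1 = n by omega, ← pow_mul, show 2 * n = n * 2 by ring]
    rw [key]
    have h2 : (n:ℝ) * mm ≤ (n:ℝ)*(4/3)*(N:ℝ)^2 := by
      rw [mul_assoc (n:ℝ)]
      exact mul_le_mul_of_nonneg_left hmm2 (by positivity)
    apply mul_le_mul_of_nonneg_left h2
    positivity
    -- the lifting map from coefficient pairs to K × K
  set Φ : (Fin n → ↥C × ↥C) → K × K :=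
    fun g => (mp (fun i => ((g i).1 : ℤ)), mp (fun i => ((g i).2 : ℤ))) with hΦdef
  set cg : (Fin n → ↥C × ↥C) → Fin n → ℤ :=
    fun g i => ((g i).1 : ℤ) - ((g i).2 : ℤ) with hcgdef
  have hSreq : ∀ g, ∑ i, ((cg g i : ℤ) : ℝ) = Sr g := by
    intro g
    rw [hSrdef]
    refine Finset.sum_congr rfl fun i _ => ?_
    rw [hcgdef, hf2def]
    push_cast
    ring
  set Q : (Fin n → ↥C × ↥C) → ℝ :=
    fun g => ∑ i, (((p:ℕ):ℝ) * ((cg g i : ℤ) : ℝ) - Sr g)^2 with hQdef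
  have hQnn : ∀ g, 0 ≤ Q g := fun g => Finset.sum_nonneg fun i _ => sq_nonneg _
  have hsub : ∀ g, (Φ g).1 - (Φ g).2
      = ∑ i : Fin n, ((cg g i : ℤ) : K) * ω ^ ((i : ℕ) + 1) := by
    intro g
    rw [hΦdef]
    simp only [hmp]
    rw [← Finset.sum_sub_distrib]
    refine Finset.sum_congr rfl fun i _ => ?_
    rw [hcgdef]
    push_cast
    ring
  have hdist : ∀ g, cycNormDist (p:ℕ) ω N (Φ g).1 (Φ g).2
      = Real.sqrt (Q g / (4*(N:ℝ)^2*((p:ℕ):ℝ)^2*(n:ℝ))) := by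
    intro g
    have hkey : cycDist (p:ℕ) ω (Φ g).1 (Φ g).2 = Real.sqrt (Q g) := by
      rw [cycDist, cycNorm, hsub g]
      congr 1
      rw [key_dist p hp K ω hω (cg g), hQdef]
      refine Finset.sum_congr rfl fun i _ => ?_
      rw [hSreq g]
    rw [cycNormDist, hkey]
    have hden : 2*(N:ℝ)*((p:ℕ):ℝ)*Real.sqrt (((p:ℕ):ℝ) - 1)
        = Real.sqrt (4*(N:ℝ)^2*((p:ℕ):ℝ)^2*(n:ℝ)) := by
      rw [show (4*(N:ℝ)^2*((p:ℕ):ℝ)^2*(n:ℝ)) = (2*(N:ℝ)*((p:ℕ):ℝ))^2 * (n:ℝ) by ring,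
        Real.sqrt_mul (by positivity), Real.sqrt_sq (by positivity), hnR]
    rw [hden, ← Real.sqrt_div (hQnn g)]
  -- bad events
  set t1 : ℝ := (4/3)*ε^2*(N:ℝ)^2*(n:ℝ) with ht1def
  set t2 : ℝ := (2/3)*ε^2*(N:ℝ)^2*((p:ℕ):ℝ)*(n:ℝ) with ht2def
  have ht1pos : 0 < t1 := by rw [ht1def]; positivity
  have ht2pos : 0 < t2 := by rw [ht2def]; positivity
  have hbad : ∀ g, ε < |cycNormDist (p:ℕ) ω N (Φ g).1 (Φ g).2 - 1/Real.sqrt 6| →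
      t1 < |Y g| ∨ t2 < Sr g ^ 2 := by
    intro g hg
    rw [hdist g] at hg
    have hTnn : 0 ≤ Q g / (4*(N:ℝ)^2*((p:ℕ):ℝ)^2*(n:ℝ)) := by
      have := hQnn g
      positivity
    have h2 := aux_eps_sq hε hTnn hg
    have hQeq : Q g = ((p:ℕ):ℝ)^2 * (Y g + (n:ℝ)*mm) - (((p:ℕ):ℝ)+1) * Sr g ^ 2 := by
      have hX : ∑ i, ((cg g i : ℤ):ℝ)^2 = Y g + (n:ℝ) * mm := by
        rw [hYdef]
        have : ∀ i : Fin n, ((cg g i : ℤ):ℝ)^2 = f1 (g i) + mm := by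
          intro i
          rw [hcgdef, hf1def]
          push_cast
          ring
        rw [Finset.sum_congr rfl fun i _ => this i, Finset.sum_add_distrib, Finset.sum_const,
          Finset.card_univ, Fintype.card_fin, nsmul_eq_mul]
      simp only [hQdef]
      have expand : ∀ i : Fin n, (((p:ℕ):ℝ) * ((cg g i : ℤ):ℝ) - Sr g)^2
          = ((p:ℕ):ℝ)^2 * ((cg g i : ℤ):ℝ)^2
            - 2*((p:ℕ):ℝ)*(Sr g)*((cg g i : ℤ):ℝ) + Sr g ^2 := by
        intro i
        ring
      rw [Finset.sum_congr rfl fun i _ => expand i, Finset.sum_add_distrib,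
        Finset.sum_sub_distrib, ← Finset.mul_sum, ← Finset.mul_sum, hX, hSreq g,
        Finset.sum_const, Finset.card_univ, Fintype.card_fin, nsmul_eq_mul, hnR]
      ring
    have hT : Q g / (4*(N:ℝ)^2*((p:ℕ):ℝ)^2*(n:ℝ))
        = (((p:ℕ):ℝ)^2 * (Y g + (n:ℝ)*(2*(N:ℝ)*((N:ℝ)+1)/3)) - (((p:ℕ):ℝ)+1) * Sr g ^ 2)
          / (4*(N:ℝ)^2*((p:ℕ):ℝ)^2*(n:ℝ)) := by
      rw [hQeq, hmmdef]
    have := aux_bad hε hN1 hpR hA1 hT hnpos (sq_nonneg (Sr g)) h2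
    rw [← ht1def, ← ht2def] at this
    exact this
  -- counting
  set B1 : Finset (Fin n → ↥C × ↥C) := Finset.univ.filter (fun g => t1 < |Y g|) with hB1def
  set B2 : Finset (Fin n → ↥C × ↥C) := Finset.univ.filter (fun g => t2 < Sr g ^ 2) with hB2def
  set badΩ : Finset (Fin n → ↥C × ↥C) :=
    Finset.univ.filter
      (fun g => ε < |cycNormDist (p:ℕ) ω N (Φ g).1 (Φ g).2 - 1/Real.sqrt 6|) with hbadΩdef
  have hsubB : badΩ ⊆ B1 ∪ B2 := by
    intro g hg
    rw [hbadΩdef, Finset.mem_filter] at hg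
    rw [Finset.mem_union, hB1def, hB2def, Finset.mem_filter, Finset.mem_filter]
    rcases hbad g hg.2 with h | h
    · exact Or.inl ⟨Finset.mem_univ _, h⟩
    · exact Or.inr ⟨Finset.mem_univ _, h⟩
  set DD : ℝ := (2*(N:ℝ)+1)^(2*n) with hDDdef
  have hDDpos : 0 < DD := by rw [hDDdef]; positivity
  have hcount1 : (B1.card : ℝ) < (ε/2) * DD := by
    have hc := count_cheby Y t1 ht1pos
    rw [← hB1def] at hc
    have hlt : (2*(N:ℝ)+1)^(2*n) * (16*(n:ℝ)*(N:ℝ)^4) < ((ε/2) * DD) * t1^2 := by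
      rw [hDDdef, ht1def]
      have h18 : 18/ε^5 < (n:ℝ) := by
        rw [hnR]
        have hε5 : (0:ℝ) < ε^5 := by positivity
        rw [div_lt_iff₀ hε5] at hA2 ⊢
        nlinarith
      have := aux_count1 hε hN1 h18
      calc (2*(N:ℝ)+1)^(2*n) * (16*(n:ℝ)*(N:ℝ)^4)
          < (2*(N:ℝ)+1)^(2*n) * ((ε/2)*((4/3)*ε^2*(N:ℝ)^2*(n:ℝ))^2) := by
            apply mul_lt_mul_of_pos_left _ (by positivity)
            rw [show 16*(n:ℝ)*(N:ℝ)^4 = 16*(n:ℝ)*(N:ℝ)^4 from rfl]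
            exact this
        _ = (ε/2) * (2*(N:ℝ)+1)^(2*n) * ((4/3)*ε^2*(N:ℝ)^2*(n:ℝ))^2 := by ring
        _ = (ε/2) * (2*(N:ℝ)+1)^(2*n) * t1^2 := by rw [ht1def]
        _ = ((ε/2) * (2*(N:ℝ)+1)^(2*n)) * t1^2 := by ring
    have hchain : (B1.card : ℝ) * t1^2 < ((ε/2) * DD) * t1^2 :=
      lt_of_le_of_lt (hc.trans hYsq) hlt
    exact lt_of_mul_lt_mul_right hchain (by positivity)
  have hcount2 : (B2.card : ℝ) < (ε/2) * DD := by
    have hc := count_markov (fun g => Sr g ^ 2) (fun g => sq_nonneg _) t2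
    rw [← hB2def] at hc
    have hlt : (2*(N:ℝ)+1)^(2*n) * ((n:ℝ)*(4/3)*(N:ℝ)^2) < ((ε/2) * DD) * t2 := by
      rw [hDDdef, ht2def]
      have := aux_count2 hε hN1 hnpos hA3
      calc (2*(N:ℝ)+1)^(2*n) * ((n:ℝ)*(4/3)*(N:ℝ)^2)
          < (2*(N:ℝ)+1)^(2*n) * ((ε/2)*((2/3)*ε^2*(N:ℝ)^2*((p:ℕ):ℝ)*(n:ℝ))) := by
            exact mul_lt_mul_of_pos_left this (by positivity)
        _ = ((ε/2) * (2*(N:ℝ)+1)^(2*n)) * ((2/3)*ε^2*(N:ℝ)^2*((p:ℕ):ℝ)*(n:ℝ)) := by ring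
    have hchain : (B2.card : ℝ) * t2 < ((ε/2) * DD) * t2 :=
      lt_of_le_of_lt (hc.trans hSsq) hlt
    exact lt_of_mul_lt_mul_right hchain (le_of_lt ht2pos)
  have hbadΩcard : (badΩ.card : ℝ) < ε * DD := by
    have h1 : badΩ.card ≤ B1.card + B2.card :=
      le_trans (Finset.card_le_card hsubB) (Finset.card_union_le _ _)
    have h2 : (badΩ.card : ℝ) ≤ (B1.card : ℝ) + (B2.card : ℝ) := by exact_mod_cast h1
    linarith
  -- transfer to K × K
  set badKF : Finset (K × K) := (cycBox (p:ℕ) ω N ×ˢ cycBox (p:ℕ) ω N).filter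
    (fun ab => |cycNormDist (p:ℕ) ω N ab.1 ab.2 - 1/Real.sqrt 6| > ε) with hbadKFdef
  have hset : {ab : K × K | ab.1 ∈ cycBox (p:ℕ) ω N ∧ ab.2 ∈ cycBox (p:ℕ) ω N ∧
      |cycNormDist (p:ℕ) ω N ab.1 ab.2 - 1 / Real.sqrt 6| > ε} = ↑badKF := by
    ext ab
    rw [hbadKFdef]
    simp only [Set.mem_setOf_eq, Finset.coe_filter, Finset.mem_product, Finset.mem_coe]
    constructor
    · rintro ⟨h1, h2, h3⟩
      exact ⟨⟨h1, h2⟩, h3⟩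
    · rintro ⟨⟨h1, h2⟩, h3⟩
      exact ⟨h1, h2, h3⟩
  have hsubK : badKF ⊆ badΩ.image Φ := by
    intro ab hab
    rw [hbadKFdef, Finset.mem_filter, Finset.mem_product] at hab
    obtain ⟨⟨h1, h2⟩, hP⟩ := hab
    rw [hboxdef, Finset.mem_image] at h1 h2
    obtain ⟨a, ha, haeq⟩ := h1
    obtain ⟨b, hb, hbeq⟩ := h2
    have hamem : ∀ i, a i ∈ C := fun i => Fintype.mem_piFinset.1 ha i
    have hbmem : ∀ i, b i ∈ C := fun i => Fintype.mem_piFinset.1 hb i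
    refine Finset.mem_image.2 ⟨fun i => (⟨a i, hamem i⟩, ⟨b i, hbmem i⟩), ?_, ?_⟩
    · rw [hbadΩdef, Finset.mem_filter]
      refine ⟨Finset.mem_univ _, ?_⟩
      have hΦeq : Φ (fun i => (⟨a i, hamem i⟩, ⟨b i, hbmem i⟩)) = ab := by
        rw [hΦdef]
        exact Prod.ext (by rw [← haeq]) (by rw [← hbeq])
      rw [hΦeq]
      exact hP
    · rw [hΦdef]
      exact Prod.ext (by rw [← haeq]) (by rw [← hbeq])
  have hncard : ({ab : K × K | ab.1 ∈ cycBox (p:ℕ) ω N ∧ ab.2 ∈ cycBox (p:ℕ) ω N ∧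
      |cycNormDist (p:ℕ) ω N ab.1 ab.2 - 1 / Real.sqrt 6| > ε}.ncard : ℝ) = (badKF.card : ℝ) := by
    rw [hset, Set.ncard_coe_finset]
  rw [hncard]
  have hKcard : (badKF.card : ℝ) < ε * DD := by
    have h1 : badKF.card ≤ badΩ.card :=
      le_trans (Finset.card_le_card hsubK) Finset.card_image_le
    have h2 : (badKF.card : ℝ) ≤ (badΩ.card : ℝ) := by exact_mod_cast h1
    linarith
  have hbox2 : ((cycBox (p:ℕ) ω N).card : ℝ)^2 = DD := by
    rw [hboxcard, hDDdef]
    push_cast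
    rw [← pow_mul, show n * 2 = 2 * n by ring]
  rw [hbox2, div_lt_iff₀ hDDpos]
  exact hKcard
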